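/- If (A,B) and (C,D) are recursively inseparable pairs of c.e. sets, then the pair (A×C, B×D) is recursively inseparable. -/

import Mathlib

/-- The c.e. set with index `e` in a standard enumeration. -/
def WSet (e : ℕ) : Set ℕ := {n | ((Denumerable.ofNat Nat.Partrec.Code e).eval n).Dom}

/-- A set of naturals is computably enumerable. -/
def CeSet (A : Set ℕ) : Prop := ∃ e : ℕ, A = WSet e

/-- Product of two sets of naturals under the standard pairing. -/
def ProdSet (A C : Set ℕ) : Set ℕ := {p | p.unpair.1 ∈ A ∧ p.unpair.2 ∈ C}

/-- `(A, B)` is an effectively inseparable pair. -/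
def EffInsep (A B : Set ℕ) : Prop :=
  ∃ ψ : ℕ →. ℕ, Partrec ψ ∧
    ∀ u v : ℕ, A ⊆ WSet u → B ⊆ WSet v → WSet u ∩ WSet v = ∅ →
      ∃ z ∈ ψ (Nat.pair u v), z ∉ WSet u ∪ WSet v
/-- `(A, B)` is a recursively inseparable pair: no computable set separates them. -/
def RecInsep (A B : Set ℕ) : Prop :=
  ¬ ∃ X : Set ℕ, ComputablePred (· ∈ X) ∧ A ⊆ X ∧ B ⊆ Xᶜ

/-- Auxiliary search predicate: `n` codes a pair `(m, s)` which witnesses either that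
`m` is in the `cB`-set and the `χ`-column at `y` contains `m`, or that `m` is in the
`cA`-set and the `χ`-column at `y` omits `m`. -/
def auxP (χ : ℕ → Bool) (cA cB : Nat.Partrec.Code) (y n : ℕ) : Bool :=
  bif χ (Nat.pair n.unpair.1 y) then (Nat.Partrec.Code.evaln n.unpair.2 cB n.unpair.1).isSome
  else (Nat.Partrec.Code.evaln n.unpair.2 cA n.unpair.1).isSome

theorem stmt2 (A B C D : Set ℕ)
    (hA : CeSet A) (hB : CeSet B) (hC : CeSet C) (hD : CeSet D)
    (hAB : Disjoint A B) (hCD : Disjoint C D)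
    (h1 : RecInsep A B) (h2 : RecInsep C D) :
    RecInsep (ProdSet A C) (ProdSet B D) := by
  obtain ⟨eA, hAeq⟩ := hA
  obtain ⟨eB, hBeq⟩ := hB
  set cA : Nat.Partrec.Code := Denumerable.ofNat Nat.Partrec.Code eA with hcA
  set cB : Nat.Partrec.Code := Denumerable.ofNat Nat.Partrec.Code eB with hcB
  rintro ⟨X, hXc, hX1, hX2⟩
  obtain ⟨χ, hχ, hXeq⟩ := ComputablePred.computable_iff.1 hXc
  have hXmem : ∀ n, n ∈ X ↔ χ n = true := fun n => iff_of_eq (congrFun hXeq n)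
  -- membership via `evaln`
  have memA : ∀ a, a ∈ A ↔ ∃ s, (Nat.Partrec.Code.evaln s cA a).isSome := by
    intro a
    rw [hAeq]
    constructor
    · intro hdom
      obtain ⟨x, hx⟩ := Part.dom_iff_mem.1 hdom
      obtain ⟨k, hk⟩ := Nat.Partrec.Code.evaln_complete.1 hx
      exact ⟨k, Option.isSome_iff_exists.2 ⟨x, hk⟩⟩
    · rintro ⟨k, hk⟩
      obtain ⟨x, hx⟩ := Option.isSome_iff_exists.1 hk
      exact Part.dom_iff_mem.2 ⟨x, Nat.Partrec.Code.evaln_complete.2 ⟨k, hx⟩⟩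
  have memB : ∀ b, b ∈ B ↔ ∃ s, (Nat.Partrec.Code.evaln s cB b).isSome := by
    intro b
    rw [hBeq]
    constructor
    · intro hdom
      obtain ⟨x, hx⟩ := Part.dom_iff_mem.1 hdom
      obtain ⟨k, hk⟩ := Nat.Partrec.Code.evaln_complete.1 hx
      exact ⟨k, Option.isSome_iff_exists.2 ⟨x, hk⟩⟩
    · rintro ⟨k, hk⟩
      obtain ⟨x, hx⟩ := Option.isSome_iff_exists.1 hk
      exact Part.dom_iff_mem.2 ⟨x, Nat.Partrec.Code.evaln_complete.2 ⟨k, hx⟩⟩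
  -- the key dichotomy, from recursive inseparability of (A, B)
  have key : ∀ y, (∃ b ∈ B, χ (Nat.pair b y) = true) ∨ (∃ a ∈ A, χ (Nat.pair a y) = false) := by
    intro y
    by_contra hcon
    push_neg at hcon
    obtain ⟨hL, hR⟩ := hcon
    apply h1
    refine ⟨{x | χ (Nat.pair x y) = true}, ?_, ?_, ?_⟩
    · exact ComputablePred.computable_iff.2
        ⟨fun x => χ (Nat.pair x y),
          hχ.comp (Primrec₂.natPair.to_comp.comp Computable.id (Computable.const y)), rfl⟩
    · intro x hx
      rcases Bool.eq_false_or_eq_true (χ (Nat.pair x y)) with h | h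
      · exact h
      · exact absurd h (hR x hx)
    · intro x hx ht
      exact hL x hx ht
  -- totality of the search
  have total : ∀ y, ∃ n, auxP χ cA cB y n = true := by
    intro y
    rcases key y with ⟨b, hbB, hbt⟩ | ⟨a, haA, haf⟩
    · obtain ⟨s, hs⟩ := (memB b).1 hbB
      exact ⟨Nat.pair b s, by simp [auxP, Nat.unpair_pair, hbt, hs]⟩
    · obtain ⟨s, hs⟩ := (memA a).1 haA
      exact ⟨Nat.pair a s, by simp [auxP, Nat.unpair_pair, haf, hs]⟩
  -- the search function is computable
  have hp2 : Computable₂ (auxP χ cA cB) := by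
    have pb : Primrec fun a : ℕ × ℕ => a.2.unpair.1 :=
      Primrec.fst.comp (Primrec.unpair.comp Primrec.snd)
    have ps : Primrec fun a : ℕ × ℕ => a.2.unpair.2 :=
      Primrec.snd.comp (Primrec.unpair.comp Primrec.snd)
    have hχv : Computable fun a : ℕ × ℕ => χ (Nat.pair a.2.unpair.1 a.1) :=
      hχ.comp (Primrec₂.natPair.to_comp.comp pb.to_comp Computable.fst)
    have hBv : Computable fun a : ℕ × ℕ =>
        (Nat.Partrec.Code.evaln a.2.unpair.2 cB a.2.unpair.1).isSome :=
      (Primrec.option_isSome.comp (Nat.Partrec.Code.primrec_evaln.comp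
        (((ps.pair (Primrec.const cB)).pair pb)))).to_comp
    have hAv : Computable fun a : ℕ × ℕ =>
        (Nat.Partrec.Code.evaln a.2.unpair.2 cA a.2.unpair.1).isSome :=
      (Primrec.option_isSome.comp (Nat.Partrec.Code.primrec_evaln.comp
        (((ps.pair (Primrec.const cA)).pair pb)))).to_comp
    exact (Computable.cond hχv hBv hAv).to₂
  -- the least-witness function
  have hh : Computable fun y => Nat.find (total y) := by
    have hrf : Partrec fun y => Nat.rfind fun n => (auxP χ cA cB y n : Part Bool) :=
      Partrec.rfind hp2.partrec₂
    apply hrf.of_eq_tot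
    intro y
    refine Nat.mem_rfind.2 ⟨?_, ?_⟩
    · exact Part.mem_some_iff.2 (Nat.find_spec (total y)).symm
    · intro m hm
      exact Part.mem_some_iff.2 (Bool.eq_false_iff.2 (Nat.find_min (total y) hm)).symm
  -- the separating set for (C, D)
  have hS : Computable fun y => χ (Nat.pair (Nat.find (total y)).unpair.1 y) :=
    hχ.comp (Primrec₂.natPair.to_comp.comp
      ((Primrec.fst.comp Primrec.unpair).to_comp.comp hh) Computable.id)
  apply h2
  refine ⟨{y | χ (Nat.pair (Nat.find (total y)).unpair.1 y) = true}, ?_, ?_, ?_⟩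
  · exact ComputablePred.computable_iff.2 ⟨_, hS, rfl⟩
  · -- C ⊆ the set
    intro y hyC
    have hspec := Nat.find_spec (total y)
    show χ (Nat.pair (Nat.find (total y)).unpair.1 y) = true
    cases hv : χ (Nat.pair (Nat.find (total y)).unpair.1 y) with
    | true => rfl
    | false =>
      exfalso
      rw [auxP] at hspec
      rw [hv] at hspec
      simp only [Bool.cond_false] at hspec
      have haA : (Nat.find (total y)).unpair.1 ∈ A :=
        (memA _).2 ⟨(Nat.find (total y)).unpair.2, hspec⟩
      have hprod : Nat.pair (Nat.find (total y)).unpair.1 y ∈ ProdSet A C := by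
        constructor <;> simp [Nat.unpair_pair, haA, hyC]
      have h' := (hXmem _).1 (hX1 hprod)
      rw [h'] at hv
      exact Bool.noConfusion hv
  · -- D ⊆ complement
    intro y hyD hmem
    have hmem' : χ (Nat.pair (Nat.find (total y)).unpair.1 y) = true := hmem
    have hspec := Nat.find_spec (total y)
    rw [auxP] at hspec
    rw [hmem'] at hspec
    simp only [Bool.cond_true] at hspec
    have hbB : (Nat.find (total y)).unpair.1 ∈ B :=
      (memB _).2 ⟨(Nat.find (total y)).unpair.2, hspec⟩
    have hprod : Nat.pair (Nat.find (total y)).unpair.1 y ∈ ProdSet B D := by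
      constructor <;> simp [Nat.unpair_pair, hbB, hyD]
    exact hX2 hprod ((hXmem _).2 hmem')
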